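/- Let D be a Delaunay polytope of an n-dimensional lattice L with circumcenter c, and for i ∈ Z let r_i be the distance from (1−2i)c to the nearest lattice point of L. If den(c) = 2 or den(c) = 4, then r_i ≥ r_0 for all i ∈ Z (D is of the first type). -/

import Mathlib

open scoped InnerProductSpace

/-- If `D` is a Delaunay polytope of a lattice `L` with circumcenter `c` (a
vertex translated to the origin) and the denominator of `c` is `2` or `4`, then
for every `i ∈ ℤ` the distance `r_i` from `(1−2i)c` to `L` is at least the
circumradius `r₀ = infDist c L`:  `D` is of the first type. -/
theorem stmt_11 (n : ℕ) (b : Module.Basis (Fin n) ℝ (EuclideanSpace ℝ (Fin n)))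
    (L : AddSubgroup (EuclideanSpace ℝ (Fin n)))
    (hL : (L : Set (EuclideanSpace ℝ (Fin n))) = ↑(Submodule.span ℤ (Set.range ⇑b)))
    (c : EuclideanSpace ℝ (Fin n)) (r₀ : ℝ)
    (hempty : ∀ y ∈ L, r₀ ≤ dist c y)
    (h0vert : (0 : EuclideanSpace ℝ (Fin n)) ∈ L ∧ dist c (0 : EuclideanSpace ℝ (Fin n)) = r₀)
    (d : ℕ) (hden : IsLeast {d : ℕ | 0 < d ∧ (d : ℝ) • c ∈ L} d)
    (hd : d = 2 ∨ d = 4) :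
    ∀ i : ℤ, r₀ ≤ Metric.infDist (((1 - 2 * i : ℤ) : ℝ) • c)
      (L : Set (EuclideanSpace ℝ (Fin n))) := by
  intro i
  obtain ⟨⟨-, hdc⟩, -⟩ := hden
  have hLne : (L : Set (EuclideanSpace ℝ (Fin n))).Nonempty := ⟨0, h0vert.1⟩
  have hz : ∀ (m : ℤ), (((d : ℤ) * m : ℤ) : ℝ) • c ∈ L := by
    intro m
    have h := AddSubgroup.zsmul_mem L hdc m
    have heq : m • ((d : ℝ) • c) = (((d : ℤ) * m : ℤ) : ℝ) • c := by
      rw [← Int.cast_smul_eq_zsmul ℝ m, smul_smul]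
      congr 1; push_cast; ring
    rwa [heq] at h
  have key : ∃ ε : ℝ, (ε = 1 ∨ ε = -1) ∧ ((1 - 2 * i : ℤ) : ℝ) • c - ε • c ∈ L := by
    rcases hd with rfl | rfl
    · refine ⟨1, Or.inl rfl, ?_⟩
      have h := hz (-i)
      have heq : ((1 - 2 * i : ℤ) : ℝ) • c - (1 : ℝ) • c
          = ((((2 : ℕ) : ℤ) * (-i) : ℤ) : ℝ) • c := by
        rw [← sub_smul]; congr 1; push_cast; ring
      rw [heq]
      rwa [Int.cast_smul_eq_zsmul] at h ⊢
    · rcases Int.even_or_odd i with ⟨k, hk⟩ | ⟨k, hk⟩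
      · refine ⟨1, Or.inl rfl, ?_⟩
        have h := hz (-k)
        have heq : ((1 - 2 * i : ℤ) : ℝ) • c - (1 : ℝ) • c
            = ((((4 : ℕ) : ℤ) * (-k) : ℤ) : ℝ) • c := by
          rw [← sub_smul]; congr 1; subst hk; push_cast; ring
        rw [heq]
        rwa [Int.cast_smul_eq_zsmul] at h ⊢
      · refine ⟨-1, Or.inr rfl, ?_⟩
        have h := hz ((1 - i) / 2)
        have hdiv : ((1 : ℤ) - i) / 2 = -k := by omega
        rw [hdiv] at h
        have heq : ((1 - 2 * i : ℤ) : ℝ) • c - (-1 : ℝ) • c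
            = ((((4 : ℕ) : ℤ) * (-k) : ℤ) : ℝ) • c := by
          rw [← sub_smul]; congr 1; subst hk; push_cast; ring
        rw [heq]
        rwa [Int.cast_smul_eq_zsmul] at h ⊢
  obtain ⟨ε, hε, hmem⟩ := key
  by_contra hcon
  push_neg at hcon
  obtain ⟨y, hy, hlt⟩ := (Metric.infDist_lt_iff hLne).mp hcon
  refine absurd hlt (not_lt.mpr ?_)
  set x := ((1 - 2 * i : ℤ) : ℝ) • c with hx
  have hy' : y - (x - ε • c) ∈ L := L.sub_mem hy hmem
  have hdist : dist x y = dist (ε • c) (y - (x - ε • c)) := by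
    rw [dist_eq_norm, dist_eq_norm]
    congr 1
    abel
  rw [hdist]
  rcases hε with rfl | rfl
  · simp only [one_smul] at hy' ⊢
    exact hempty _ hy'
  · have : dist ((-1 : ℝ) • c) (y - (x - (-1 : ℝ) • c))
        = dist c (-(y - (x - (-1 : ℝ) • c))) := by
      rw [neg_one_smul, dist_neg]
    rw [this]
    exact hempty _ (L.neg_mem hy')
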